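/- Let G be a bipartite graph of order n and S ⊆ V(G). If λ₁ ≥ ⋯ ≥ λ_n are the eigenvalues of the self-loop graph G_S, then the eigenvalues of G_{V(G)∖S} (loops at the complementary vertex set) are exactly 1 − λ_n ≥ ⋯ ≥ 1 − λ₁. -/

import Mathlib

open Matrix Finset

/-- The diagonal 0-1 matrix indicating the loop vertices in `S`. -/
def loopMat (n : ℕ) (S : Finset (Fin n)) : Matrix (Fin n) (Fin n) ℝ :=
  Matrix.of fun i j => if i = j ∧ i ∈ S then 1 else 0

open Polynomial in
private lemma charpoly_conj' {n : ℕ} (U V M : Matrix (Fin n) (Fin n) ℝ)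
    (hUV : U * V = 1) (hVU : V * U = 1) :
    (U * M * V).charpoly = M.charpoly := by
  have hcm : U.map C * M.charmatrix * V.map C = charmatrix (U * M * V) := by
    rw [charmatrix, charmatrix, mul_sub, sub_mul]
    congr 1
    · rw [scalar_apply, ← smul_eq_mul_diagonal, smul_mul_assoc, ← Matrix.map_mul, hUV,
        Matrix.map_one _ (map_zero C) (map_one C), smul_eq_diagonal_mul, mul_one]
    · simp [RingHom.mapMatrix_apply, Matrix.map_mul]
  rw [Matrix.charpoly, Matrix.charpoly, ← hcm, det_mul, det_mul, mul_comm, ← mul_assoc, ← det_mul,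
    ← Matrix.map_mul, hVU, Matrix.map_one _ (map_zero C) (map_one C), det_one, one_mul]

open Polynomial in
private lemma charpoly_diag' {n : ℕ} (d : Fin n → ℝ) :
    (Matrix.diagonal d).charpoly = ∏ i, (X - C (d i)) := by
  have h : charmatrix (Matrix.diagonal d) = Matrix.diagonal fun i => X - C (d i) := by
    rw [charmatrix, scalar_apply, RingHom.mapMatrix_apply, Matrix.diagonal_map (by simp),
      Matrix.diagonal_sub]
  rw [Matrix.charpoly, h, det_diagonal]

open Polynomial in
private lemma charpoly_of_hermitian' {n : ℕ} {M : Matrix (Fin n) (Fin n) ℝ}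
    (hM : M.IsHermitian) :
    M.charpoly = ∏ i, (X - C (hM.eigenvalues i)) := by
  set U : Matrix (Fin n) (Fin n) ℝ := (hM.eigenvectorUnitary : Matrix (Fin n) (Fin n) ℝ) with hU
  have hU1 : U * star U = 1 := Matrix.mem_unitaryGroup_iff.mp hM.eigenvectorUnitary.2
  have hU2 : star U * U = 1 := Matrix.mem_unitaryGroup_iff'.mp hM.eigenvectorUnitary.2
  have hdiag : (RCLike.ofReal ∘ hM.eigenvalues : Fin n → ℝ) = hM.eigenvalues := by
    funext i; simp
  conv_lhs => rw [hM.spectral_theorem]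
  rw [Unitary.conjStarAlgAut_apply, ← hU, charpoly_conj' _ _ _ hU1 hU2, hdiag, charpoly_diag']

private lemma conj_eq' {n : ℕ} (G : SimpleGraph (Fin n)) [DecidableRel G.Adj]
    (c : G.Coloring (Fin 2)) (S : Finset (Fin n)) :
    (Matrix.diagonal fun i => if c i = 0 then (1:ℝ) else -1) *
      (1 - (G.adjMatrix ℝ + loopMat n S)) *
      (Matrix.diagonal fun i => if c i = 0 then (1:ℝ) else -1) =
      G.adjMatrix ℝ + loopMat n Sᶜ := by
  set s : Fin n → ℝ := fun i => if c i = 0 then (1:ℝ) else -1 with hs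
  ext i j
  rw [Matrix.mul_diagonal, Matrix.diagonal_mul]
  by_cases hij : i = j
  · subst hij
    have : s i * s i = 1 := by by_cases h : c i = 0 <;> simp [hs, h]
    simp only [Matrix.sub_apply, Matrix.add_apply, Matrix.one_apply_eq,
      SimpleGraph.adjMatrix_apply, loopMat, Matrix.of_apply]
    by_cases h : i ∈ S <;> simp [mul_comm, mul_assoc, this, h, G.irrefl]
  · have hloop1 : loopMat n S i j = 0 := by simp [loopMat, hij]
    have hloop2 : loopMat n Sᶜ i j = 0 := by simp [loopMat, hij]
    simp only [Matrix.sub_apply, Matrix.add_apply, Matrix.one_apply_ne hij, hloop1, hloop2,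
      SimpleGraph.adjMatrix_apply, zero_sub, add_zero, neg_add_rev]
    by_cases hadj : G.Adj i j
    · have hc : c i ≠ c j := c.valid hadj
      have : s i * s j = -1 := by
        by_cases h1 : c i = 0 <;> by_cases h2 : c j = 0 <;>
          first | (exfalso; omega) | simp [hs, h1, h2]
      simp [hadj, this]
    · simp [hadj]

/-- if `G` is a bipartite graph of order `n` and `S ⊆ V(G)`, then the
multiset of eigenvalues of `G_{V∖S}` is exactly `{1 − λ : λ eigenvalue of G_S}`. -/
theorem bipartite_complement_loops_spectrum (n : ℕ) (G : SimpleGraph (Fin n))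
    [DecidableRel G.Adj] (hbip : G.Colorable 2) (S : Finset (Fin n))
    (hA : (G.adjMatrix ℝ + loopMat n S).IsHermitian)
    (hB : (G.adjMatrix ℝ + loopMat n Sᶜ).IsHermitian) :
    Finset.univ.val.map hB.eigenvalues =
      (Finset.univ.val.map hA.eigenvalues).map (fun x => 1 - x) := by
  classical
  open Polynomial in
  set A := G.adjMatrix ℝ + loopMat n S with hA_def
  set B := G.adjMatrix ℝ + loopMat n Sᶜ with hB_def
  obtain ⟨c⟩ := hbip
  set P : Matrix (Fin n) (Fin n) ℝ :=
    Matrix.diagonal fun i => if c i = 0 then (1:ℝ) else -1 with hP_def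
  have hPP : P * P = 1 := by
    rw [hP_def, Matrix.diagonal_mul_diagonal]
    convert Matrix.diagonal_one using 2
    funext i
    by_cases h : c i = 0 <;> simp [h]
  set U : Matrix (Fin n) (Fin n) ℝ := (hA.eigenvectorUnitary : Matrix (Fin n) (Fin n) ℝ) with hU
  have hU1 : U * star U = 1 := Matrix.mem_unitaryGroup_iff.mp hA.eigenvectorUnitary.2
  have hU2 : star U * U = 1 := Matrix.mem_unitaryGroup_iff'.mp hA.eigenvectorUnitary.2
  have hone : (1 : Matrix (Fin n) (Fin n) ℝ) - A
      = U * Matrix.diagonal (fun i => 1 - hA.eigenvalues i) * star U := by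
    have hd : Matrix.diagonal (fun i => 1 - hA.eigenvalues i)
        = 1 - Matrix.diagonal (RCLike.ofReal ∘ hA.eigenvalues) := by
      rw [← Matrix.diagonal_one, ← Matrix.diagonal_sub]
      congr 1
    rw [hd, mul_sub, sub_mul, mul_one, hU1]
    conv_lhs => rw [hA.spectral_theorem, Unitary.conjStarAlgAut_apply]
  have hBP : B = (P * U) * Matrix.diagonal (fun i => 1 - hA.eigenvalues i) * (star U * P) := by
    rw [hB_def, ← conj_eq' G c S, ← hP_def, ← hA_def, hone]
    noncomm_ring
  have hkey : (∏ i, (X - C (hB.eigenvalues i))) = ∏ i, (X - C (1 - hA.eigenvalues i)) := by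
    rw [← charpoly_of_hermitian' hB, hB_def]
    rw [← hB_def, hBP, charpoly_conj', charpoly_diag']
    · calc (P * U) * (star U * P) = P * (U * star U) * P := by noncomm_ring
        _ = 1 := by rw [hU1, mul_one, hPP]
    · calc (star U * P) * (P * U) = star U * (P * P) * U := by noncomm_ring
        _ = 1 := by rw [hPP, mul_one, hU2]
  have hprod : ∀ f : Fin n → ℝ, (∏ i, (X - C (f i)))
      = ((Finset.univ.val.map f).map fun a => X - C a).prod := by
    intro f
    rw [Multiset.map_map, Finset.prod_eq_multiset_prod]
    rfl
  rw [hprod, hprod] at hkey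
  have := congrArg Polynomial.roots hkey
  rw [Polynomial.roots_multiset_prod_X_sub_C, Polynomial.roots_multiset_prod_X_sub_C] at this
  rw [this, Multiset.map_map]
  rfl
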